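/- Let (k₁, k₂, k₃) = (2, 2, 3), w₁ = (x⁻¹, 0, 0, 0, 0, (3/2)·x⁻²) and w₂ = (0, x⁻², x⁻¹, (2/3)·x⁻², −(4/3)·x⁻³, 0) (components in the order (a₁₂, a₁₃, a₂₃, b₁, b₂, b₃)). Then E′(w₁), F′(w₁), E′(w₂), F′(w₂) ∈ B; whenever α·w₁ + β·w₂ ∈ B for α, β ∈ ℂ one has α = β = 0; and every z ∈ V with E′(z) ∈ B and F′(z) ∈ B lies in ℂ·w₁ + ℂ·w₂ + B. In other words, the 𝔰′-invariant part of H¹(ℂℙ¹, T₂) is two-dimensional with basis the classes of w₁ and w₂. -/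

import Mathlib

noncomputable section

open LaurentPolynomial

/-- `L = ℂ[x, x⁻¹]`, the Laurent polynomials over `ℂ`. -/
abbrev L : Type := LaurentPolynomial ℂ

/-- The coefficient of `x^n` in a Laurent polynomial. -/
def coeffL (p : L) (n : ℤ) : ℂ := (AddMonoidAlgebra.coeff p) n

lemma coeffL_zero (n : ℤ) : coeffL 0 n = 0 := by
  unfold coeffL; simp

lemma coeffL_add (a b : L) (n : ℤ) : coeffL (a + b) n = coeffL a n + coeffL b n := by
  unfold coeffL; simp

lemma coeffL_smul (c : ℂ) (a : L) (n : ℤ) : coeffL (c • a) n = c * coeffL a n := by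
  unfold coeffL; simp

/-- `L₊`: Laurent polynomials involving only nonnegative powers of `x`. -/
def Lplus : Submodule ℂ L where
  carrier := {p | ∀ n : ℤ, n < 0 → coeffL p n = 0}
  zero_mem' := fun n _ => coeffL_zero n
  add_mem' := by intro a b ha hb n hn; rw [coeffL_add, ha n hn, hb n hn, add_zero]
  smul_mem' := by intro c p hp n hn; rw [coeffL_smul, hp n hn, mul_zero]

/-- `L₋`: Laurent polynomials involving only nonpositive powers of `x`. -/
def Lminus : Submodule ℂ L where
  carrier := {p | ∀ n : ℤ, 0 < n → coeffL p n = 0}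
  zero_mem' := fun n _ => coeffL_zero n
  add_mem' := by intro a b ha hb n hn; rw [coeffL_add, ha n hn, hb n hn, add_zero]
  smul_mem' := by intro c p hp n hn; rw [coeffL_smul, hp n hn, mul_zero]

/-- The derivative `d/dx` on Laurent polynomials. -/
def D (p : L) : L := Finsupp.sum (AddMonoidAlgebra.coeff p) fun n a => ((n : ℂ) * a) • T (n - 1)

/-- `V = L⁶`, the model of Čech 1-cochains with values in `T₂`: a tuple
`v = (a₁₂, a₁₃, a₂₃, b₁, b₂, b₃)` (components `v 0, …, v 5`) encodes the
vector field `Σ_{i<j} a_{ij}(x)ξᵢξⱼ∂/∂x + Σ_t b_t(x)ξ₁ξ₂ξ₃∂/∂ξ_t` on `U₀ ∩ U₁`. -/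
abbrev V : Type := Fin 6 → L

/-- `B₀ = (L₊)⁶`: cochains holomorphic in `U₀`. -/
def B0 : Submodule ℂ V := Submodule.pi Set.univ fun _ => Lplus

/-- The linear map `v ↦ x^m · (v i)`. -/
def cndA (m : ℤ) (i : Fin 6) : V →ₗ[ℂ] L :=
  (LinearMap.mulLeft ℂ (T m)).comp (LinearMap.proj i)

/-- The linear map `v ↦ x^m · (v i − c·x⁻¹·(v j))`. -/
def cndB (m : ℤ) (c : ℂ) (i j : Fin 6) : V →ₗ[ℂ] L :=
  (LinearMap.mulLeft ℂ (T m)).comp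
    (LinearMap.proj i - c • (LinearMap.mulLeft ℂ (T (-1))).comp (LinearMap.proj j))

/-- `B₁`: cochains holomorphic in `U₁`, i.e. `v` with
`x^(kᵢ+kⱼ−2)·a_{ij} ∈ L₋` for all `i < j` and
`x^(d−k_t)·(b_t − σ_t·k_t·x⁻¹·a_{(t)}) ∈ L₋` for `t = 1, 2, 3`
(σ₁ = 1, σ₂ = −1, σ₃ = 1, a₍₁₎ = a₂₃, a₍₂₎ = a₁₃, a₍₃₎ = a₁₂, d = k₁+k₂+k₃). -/
def B1 (k1 k2 k3 : ℤ) : Submodule ℂ V :=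
  Lminus.comap (cndA (k1 + k2 - 2) 0) ⊓
  Lminus.comap (cndA (k1 + k3 - 2) 1) ⊓
  Lminus.comap (cndA (k2 + k3 - 2) 2) ⊓
  Lminus.comap (cndB (k2 + k3) ((k1 : ℂ)) 3 2) ⊓
  Lminus.comap (cndB (k1 + k3) (-(k2 : ℂ)) 4 1) ⊓
  Lminus.comap (cndB (k1 + k2) ((k3 : ℂ)) 5 0)

/-- The coboundary subspace `B = B₀ + B₁`. -/
def B (k1 k2 k3 : ℤ) : Submodule ℂ V := B0 ⊔ B1 k1 k2 k3

/-- Action of `e = ∂/∂x` on cocycles: the componentwise derivative. -/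
def Eop : V → V := fun v i => D (v i)

/-- Action of `f = ∂/∂y` on cocycles, with components
`a_{ij} ↦ (2 − kᵢ − kⱼ)·x·a_{ij} − x²·a_{ij}′` and
`b_t ↦ σ_t·k_t·a₍ₜ₎ − (d − k_t)·x·b_t − x²·b_t′`. -/
def Fop (k1 k2 k3 : ℤ) : V → V := fun v =>
  ![((2 - k1 - k2 : ℤ) : ℂ) • (T 1 * v 0) - T 2 * D (v 0),
    ((2 - k1 - k3 : ℤ) : ℂ) • (T 1 * v 1) - T 2 * D (v 1),
    ((2 - k2 - k3 : ℤ) : ℂ) • (T 1 * v 2) - T 2 * D (v 2),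
    (k1 : ℂ) • v 2 - ((k2 + k3 : ℤ) : ℂ) • (T 1 * v 3) - T 2 * D (v 3),
    -((k2 : ℂ) • v 1) - ((k1 + k3 : ℤ) : ℂ) • (T 1 * v 4) - T 2 * D (v 4),
    (k3 : ℂ) • v 0 - ((k1 + k2 : ℤ) : ℂ) • (T 1 * v 5) - T 2 * D (v 5)]

/-- `N(v) = (0, 0, a₁₃, −b₂, 0, 0)`; `e′ = ∂/∂x + ξ₂∂/∂ξ₁` acts by `E′ = E + N`. -/
def Nop : V → V := fun v => ![0, 0, v 1, -v 4, 0, 0]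

/-- `M(v) = (0, a₂₃, 0, 0, −b₁, 0)`; `f′ = ∂/∂y + η₁∂/∂η₂` acts by `F′ = F + M`. -/
def Mop : V → V := fun v => ![0, v 2, 0, 0, -v 3, 0]

/-- The action `E′ = E + N` of `e′ = ∂/∂x + ξ₂∂/∂ξ₁`. -/
def E'op : V → V := fun v => Eop v + Nop v

/-- The action `F′ = F + M` of `f′ = ∂/∂y + η₁∂/∂η₂`. -/
def F'op (k1 k2 k3 : ℤ) : V → V := fun v => Fop k1 k2 k3 v + Mop v

/-- `N″(v) = (0, a₁₂, a₁₃, −b₂, −b₃, 0)`;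
`e″ = ∂/∂x + ξ₂∂/∂ξ₁ + ξ₃∂/∂ξ₂` acts by `E″ = E + N″`. -/
def N''op : V → V := fun v => ![0, v 0, v 1, -v 4, -v 5, 0]

/-- `M″(v) = (2a₁₃, 2a₂₃, 0, 0, −2b₁, −2b₂)`;
`f″ = ∂/∂y + 2η₁∂/∂η₂ + 2η₂∂/∂η₃` acts by `F″ = F + M″`. -/
def M''op : V → V := fun v => ![(2 : ℂ) • v 1, (2 : ℂ) • v 2, 0, 0, -((2 : ℂ) • v 3), -((2 : ℂ) • v 4)]

/-- The action `E″ = E + N″` of `e″`. -/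
def E''op : V → V := fun v => Eop v + N''op v

/-- The action `F″ = F + M″` of `f″`. -/
def F''op (k1 k2 k3 : ℤ) : V → V := fun v => Fop k1 k2 k3 v + M''op v

/-! ### Auxiliary lemmas -/

lemma coeffL_neg (a : L) (n : ℤ) : coeffL (-a) n = -coeffL a n := by
  unfold coeffL; rw [AddMonoidAlgebra.coeff_neg, Finsupp.neg_apply]

lemma coeffL_sub (a b : L) (n : ℤ) : coeffL (a - b) n = coeffL a n - coeffL b n := by
  unfold coeffL; rw [AddMonoidAlgebra.coeff_sub, Finsupp.sub_apply]

lemma coeffL_T (m n : ℤ) : coeffL (T m) n = if m = n then 1 else 0 := by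
  unfold coeffL T; rw [AddMonoidAlgebra.coeff_single, Finsupp.single_apply]

lemma coeffL_T_mul (m : ℤ) (p : L) (n : ℤ) : coeffL (T m * p) n = coeffL p (n - m) := by
  unfold coeffL
  unfold T
  rw [AddMonoidAlgebra.coeff_single_mul_apply, one_mul, neg_add_eq_sub]

lemma coeffL_D (p : L) (n : ℤ) : coeffL (D p) n = ((n + 1 : ℤ) : ℂ) * coeffL p (n + 1) := by
  unfold coeffL D
  rw [AddMonoidAlgebra.coeff_finsuppSum]
  erw [Finsupp.sum_apply]
  have key : ∀ m : ℤ, ∀ a : ℂ, AddMonoidAlgebra.coeff (((m : ℂ) * a) • T (m - 1) : L) n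
      = if m = n + 1 then ((m:ℂ) * a) else 0 := by
    intro m a
    simp only [T, AddMonoidAlgebra.coeff_smul, AddMonoidAlgebra.coeff_single, Finsupp.smul_apply,
      Finsupp.single_apply]
    rw [smul_eq_mul]
    by_cases h : m = n + 1
    · simp [h, show n + 1 - 1 = n by ring]
    · rw [if_neg h, if_neg (by omega), mul_zero]
  rw [Finsupp.sum]
  rw [Finset.sum_congr rfl (fun m _ => key m (AddMonoidAlgebra.coeff p m))]
  rw [Finset.sum_ite_eq' (AddMonoidAlgebra.coeff p).support (n+1)
    (fun m => ((m:ℤ):ℂ) * AddMonoidAlgebra.coeff p m)]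
  push_cast
  split_ifs with h
  · rfl
  · rw [Finsupp.notMem_support_iff.mp h, mul_zero]

/-- Truncation to the negative-exponent part. -/
def negp (p : L) : L :=
  AddMonoidAlgebra.ofCoeff (Finsupp.filter (fun n => n < 0) (AddMonoidAlgebra.coeff p))

lemma coeffL_negp (p : L) (n : ℤ) : coeffL (negp p) n = if n < 0 then coeffL p n else 0 := by
  unfold coeffL negp; rw [AddMonoidAlgebra.coeff_ofCoeff, Finsupp.filter_apply]

/-- Concrete characterization of membership in `B 2 2 3` by finitely many
coefficient conditions. -/
lemma mem_B_iff (v : V) : v ∈ B 2 2 3 ↔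
    (coeffL (v 0) (-1) = 0 ∧
     coeffL (v 1) (-1) = 0 ∧ coeffL (v 1) (-2) = 0 ∧
     coeffL (v 2) (-1) = 0 ∧ coeffL (v 2) (-2) = 0 ∧
     coeffL (v 3) (-1) = 0 ∧ coeffL (v 3) (-2) = 0 ∧ coeffL (v 3) (-3) = 0 ∧
     coeffL (v 3) (-4) = 2 * coeffL (v 2) (-3) ∧
     coeffL (v 4) (-1) = 0 ∧ coeffL (v 4) (-2) = 0 ∧ coeffL (v 4) (-3) = 0 ∧
     coeffL (v 4) (-4) = -2 * coeffL (v 1) (-3) ∧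
     coeffL (v 5) (-1) = 0 ∧ coeffL (v 5) (-2) = 0 ∧
     coeffL (v 5) (-3) = 3 * coeffL (v 0) (-2)) := by
  constructor
  · intro h
    obtain ⟨y, hy, u, hu, rfl⟩ := Submodule.mem_sup.mp (show _ ∈ B0 ⊔ B1 2 2 3 from h)
    have hy' : ∀ i : Fin 6, ∀ n : ℤ, n < 0 → coeffL (y i) n = 0 :=
      fun i => hy i (Set.mem_univ i)
    have hc : ∀ i : Fin 6, ∀ n : ℤ, n < 0 → coeffL ((y + u) i) n = coeffL (u i) n := by
      intro i n hn
      rw [Pi.add_apply, coeffL_add, hy' i n hn, zero_add]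
    obtain ⟨⟨⟨⟨⟨h1, h2⟩, h3⟩, h4⟩, h5⟩, h6⟩ := hu
    have g1 : ∀ n : ℤ, 0 < n → coeffL (T 2 * u 0) n = 0 := h1
    have g2 : ∀ n : ℤ, 0 < n → coeffL (T 3 * u 1) n = 0 := h2
    have g3 : ∀ n : ℤ, 0 < n → coeffL (T 3 * u 2) n = 0 := h3
    have g4 : ∀ n : ℤ, 0 < n →
        coeffL (T 5 * (u 3 - ((2:ℤ):ℂ) • (T (-1) * u 2))) n = 0 := h4
    have g5 : ∀ n : ℤ, 0 < n →
        coeffL (T 5 * (u 4 - (-((2:ℤ):ℂ)) • (T (-1) * u 1))) n = 0 := h5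
    have g6 : ∀ n : ℤ, 0 < n →
        coeffL (T 4 * (u 5 - ((3:ℤ):ℂ) • (T (-1) * u 0))) n = 0 := h6
    simp only [coeffL_T_mul, coeffL_sub, coeffL_smul] at g1 g2 g3 g4 g5 g6
    have G1 : ∀ n : ℤ, 0 < n → coeffL (u 0) (n - 2) = 0 := g1
    have G2 : ∀ n : ℤ, 0 < n → coeffL (u 1) (n - 3) = 0 := g2
    have G3 : ∀ n : ℤ, 0 < n → coeffL (u 2) (n - 3) = 0 := g3
    have G4 : ∀ n : ℤ, 0 < n →
        coeffL (u 3) (n - 5) - ((2:ℤ):ℂ) * coeffL (u 2) (n - 5 - (-1)) = 0 := g4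
    have G5 : ∀ n : ℤ, 0 < n →
        coeffL (u 4) (n - 5) - (-((2:ℤ):ℂ)) * coeffL (u 1) (n - 5 - (-1)) = 0 := g5
    have G6 : ∀ n : ℤ, 0 < n →
        coeffL (u 5) (n - 4) - ((3:ℤ):ℂ) * coeffL (u 0) (n - 4 - (-1)) = 0 := g6
    refine ⟨?_, ?_, ?_, ?_, ?_, ?_, ?_, ?_, ?_, ?_, ?_, ?_, ?_, ?_, ?_, ?_⟩
    · rw [hc 0 (-1) (by norm_num)]
      have A := G1 1 (by norm_num); norm_num at A; exact A
    · rw [hc 1 (-1) (by norm_num)]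
      have A := G2 2 (by norm_num); norm_num at A; exact A
    · rw [hc 1 (-2) (by norm_num)]
      have A := G2 1 (by norm_num); norm_num at A; exact A
    · rw [hc 2 (-1) (by norm_num)]
      have A := G3 2 (by norm_num); norm_num at A; exact A
    · rw [hc 2 (-2) (by norm_num)]
      have A := G3 1 (by norm_num); norm_num at A; exact A
    · rw [hc 3 (-1) (by norm_num)]
      have A := G4 4 (by norm_num); have B := G3 3 (by norm_num)
      norm_num at A B; linear_combination A + 2 * B
    · rw [hc 3 (-2) (by norm_num)]
      have A := G4 3 (by norm_num); have B := G3 2 (by norm_num)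
      norm_num at A B; linear_combination A + 2 * B
    · rw [hc 3 (-3) (by norm_num)]
      have A := G4 2 (by norm_num); have B := G3 1 (by norm_num)
      norm_num at A B; linear_combination A + 2 * B
    · rw [hc 3 (-4) (by norm_num), hc 2 (-3) (by norm_num)]
      have A := G4 1 (by norm_num); norm_num at A; linear_combination A
    · rw [hc 4 (-1) (by norm_num)]
      have A := G5 4 (by norm_num); have B := G2 3 (by norm_num)
      norm_num at A B; linear_combination A - 2 * B
    · rw [hc 4 (-2) (by norm_num)]
      have A := G5 3 (by norm_num); have B := G2 2 (by norm_num)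
      norm_num at A B; linear_combination A - 2 * B
    · rw [hc 4 (-3) (by norm_num)]
      have A := G5 2 (by norm_num); have B := G2 1 (by norm_num)
      norm_num at A B; linear_combination A - 2 * B
    · rw [hc 4 (-4) (by norm_num), hc 1 (-3) (by norm_num)]
      have A := G5 1 (by norm_num); norm_num at A; linear_combination A
    · rw [hc 5 (-1) (by norm_num)]
      have A := G6 3 (by norm_num); have B := G1 2 (by norm_num)
      norm_num at A B; linear_combination A + 3 * B
    · rw [hc 5 (-2) (by norm_num)]
      have A := G6 2 (by norm_num); have B := G1 1 (by norm_num)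
      norm_num at A B; linear_combination A + 3 * B
    · rw [hc 5 (-3) (by norm_num), hc 0 (-2) (by norm_num)]
      have A := G6 1 (by norm_num); norm_num at A; linear_combination A
  · rintro ⟨H1, H2, H3, H4, H5, H6, H7, H8, H9, H10, H11, H12, H13, H14, H15, H16⟩
    apply Submodule.mem_sup.mpr
    refine ⟨fun i => v i - negp (v i), ?_, fun i => negp (v i), ?_, by
      funext i; simp⟩
    · refine Submodule.mem_pi.mpr fun i _ => ?_
      show ∀ n : ℤ, n < 0 → coeffL (v i - negp (v i)) n = 0
      intro n hn
      rw [coeffL_sub, coeffL_negp, if_pos hn, sub_self]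
    · have m1 : ∀ n : ℤ, 0 < n → coeffL (T 2 * negp (v 0)) n = 0 := by
        intro n hn
        rw [coeffL_T_mul, coeffL_negp]
        split_ifs with h
        · have hn2 : n - 2 = -1 := by omega
          rw [hn2]; exact H1
        · rfl
      have m2 : ∀ n : ℤ, 0 < n → coeffL (T 3 * negp (v 1)) n = 0 := by
        intro n hn
        rw [coeffL_T_mul, coeffL_negp]
        split_ifs with h
        · obtain h' | h' : n - 3 = -1 ∨ n - 3 = -2 := by omega
          · rw [h']; exact H2
          · rw [h']; exact H3
        · rfl
      have m3 : ∀ n : ℤ, 0 < n → coeffL (T 3 * negp (v 2)) n = 0 := by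
        intro n hn
        rw [coeffL_T_mul, coeffL_negp]
        split_ifs with h
        · obtain h' | h' : n - 3 = -1 ∨ n - 3 = -2 := by omega
          · rw [h']; exact H4
          · rw [h']; exact H5
        · rfl
      have m4 : ∀ n : ℤ, 0 < n →
          coeffL (T 5 * (negp (v 3) - ((2:ℤ):ℂ) • (T (-1) * negp (v 2)))) n = 0 := by
        intro n hn
        rw [coeffL_T_mul, coeffL_sub, coeffL_smul, coeffL_T_mul, coeffL_negp, coeffL_negp,
          show n - 5 - (-1) = n - 4 by ring]
        obtain h | h | h | h | h : n = 1 ∨ n = 2 ∨ n = 3 ∨ n = 4 ∨ 5 ≤ n := by omega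
        · subst h; norm_num; linear_combination H9
        · subst h; norm_num; linear_combination H8 - 2 * H5
        · subst h; norm_num; linear_combination H7 - 2 * H4
        · subst h; norm_num; linear_combination H6
        · rw [if_neg (by omega), if_neg (by omega)]; ring
      have m5 : ∀ n : ℤ, 0 < n →
          coeffL (T 5 * (negp (v 4) - (-((2:ℤ):ℂ)) • (T (-1) * negp (v 1)))) n = 0 := by
        intro n hn
        rw [coeffL_T_mul, coeffL_sub, coeffL_smul, coeffL_T_mul, coeffL_negp, coeffL_negp,
          show n - 5 - (-1) = n - 4 by ring]
        obtain h | h | h | h | h : n = 1 ∨ n = 2 ∨ n = 3 ∨ n = 4 ∨ 5 ≤ n := by omega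
        · subst h; norm_num; linear_combination H13
        · subst h; norm_num; linear_combination H12 + 2 * H3
        · subst h; norm_num; linear_combination H11 + 2 * H2
        · subst h; norm_num; linear_combination H10
        · rw [if_neg (by omega), if_neg (by omega)]; ring
      have m6 : ∀ n : ℤ, 0 < n →
          coeffL (T 4 * (negp (v 5) - ((3:ℤ):ℂ) • (T (-1) * negp (v 0)))) n = 0 := by
        intro n hn
        rw [coeffL_T_mul, coeffL_sub, coeffL_smul, coeffL_T_mul, coeffL_negp, coeffL_negp,
          show n - 4 - (-1) = n - 3 by ring]
        obtain h | h | h | h : n = 1 ∨ n = 2 ∨ n = 3 ∨ 4 ≤ n := by omega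
        · subst h; norm_num; linear_combination H16
        · subst h; norm_num; linear_combination H15 - 3 * H1
        · subst h; norm_num; linear_combination H14
        · rw [if_neg (by omega), if_neg (by omega)]; ring
      exact ⟨⟨⟨⟨⟨m1, m2⟩, m3⟩, m4⟩, m5⟩, m6⟩

lemma coeffL_mul_T (m : ℤ) (p : L) (n : ℤ) : coeffL (p * T m) n = coeffL p (n - m) := by
  unfold coeffL
  unfold T
  rw [AddMonoidAlgebra.coeff_mul_single_apply, mul_one, ← sub_eq_add_neg]

lemma coeffL_nsmul (k : ℕ) (a : L) (n : ℤ) : coeffL (k • a) n = k * coeffL a n := by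
  rw [← Nat.cast_smul_eq_nsmul ℂ, coeffL_smul]

lemma coeffL_zsmul (k : ℤ) (a : L) (n : ℤ) : coeffL (k • a) n = k * coeffL a n := by
  rw [← Int.cast_smul_eq_zsmul ℂ, coeffL_smul]

lemma vec6_0 (a b c d e f : L) : (![a,b,c,d,e,f] : V) 0 = a := rfl
lemma vec6_1 (a b c d e f : L) : (![a,b,c,d,e,f] : V) 1 = b := rfl
lemma vec6_2 (a b c d e f : L) : (![a,b,c,d,e,f] : V) 2 = c := rfl
lemma vec6_3 (a b c d e f : L) : (![a,b,c,d,e,f] : V) 3 = d := rfl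
lemma vec6_4 (a b c d e f : L) : (![a,b,c,d,e,f] : V) 4 = e := rfl
lemma vec6_5 (a b c d e f : L) : (![a,b,c,d,e,f] : V) 5 = f := rfl
set_option maxHeartbeats 2000000 in
/-- For `(k₁, k₂, k₃) = (2, 2, 3)`, the 𝔰′-invariant part of `H¹(ℂℙ¹, T₂)` is
two-dimensional, with basis the classes of
`w₁ = (x⁻¹, 0, 0, 0, 0, (3/2)x⁻²)` and `w₂ = (0, x⁻², x⁻¹, (2/3)x⁻², −(4/3)x⁻³, 0)`. -/
theorem stmt_8 (w1 w2 : V)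
    (hw1 : w1 = ![T (-1), 0, 0, 0, 0, (3 / 2 : ℂ) • T (-2)])
    (hw2 : w2 = ![0, T (-2), T (-1), (2 / 3 : ℂ) • T (-2), -((4 / 3 : ℂ) • T (-3)), 0]) :
    (E'op w1 ∈ B 2 2 3 ∧ F'op 2 2 3 w1 ∈ B 2 2 3 ∧
     E'op w2 ∈ B 2 2 3 ∧ F'op 2 2 3 w2 ∈ B 2 2 3) ∧
    (∀ α β : ℂ, α • w1 + β • w2 ∈ B 2 2 3 → α = 0 ∧ β = 0) ∧
    (∀ z : V, E'op z ∈ B 2 2 3 → F'op 2 2 3 z ∈ B 2 2 3 →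
      ∃ α β : ℂ, z - (α • w1 + β • w2) ∈ B 2 2 3) := by
  subst hw1; subst hw2
  refine ⟨⟨?_, ?_, ?_, ?_⟩, ?_, ?_⟩
  · rw [mem_B_iff]
    simp only [E'op, Eop, Nop, Pi.add_apply, vec6_0, vec6_1, vec6_2, vec6_3, vec6_4, vec6_5,
      coeffL_add, coeffL_sub, coeffL_neg, coeffL_smul, coeffL_nsmul, coeffL_zsmul,
      coeffL_D, coeffL_T_mul, coeffL_mul_T, coeffL_T, coeffL_zero,
      Int.reduceAdd, Int.reduceSub, Int.reduceNeg, Int.reduceMul]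
    norm_num
  · rw [mem_B_iff]
    simp only [F'op, Fop, Mop, Pi.add_apply, vec6_0, vec6_1, vec6_2, vec6_3, vec6_4, vec6_5,
      coeffL_add, coeffL_sub, coeffL_neg, coeffL_smul, coeffL_nsmul, coeffL_zsmul,
      coeffL_D, coeffL_T_mul, coeffL_mul_T, coeffL_T, coeffL_zero,
      Int.reduceAdd, Int.reduceSub, Int.reduceNeg, Int.reduceMul]
    norm_num
  · rw [mem_B_iff]
    simp only [E'op, Eop, Nop, Pi.add_apply, vec6_0, vec6_1, vec6_2, vec6_3, vec6_4, vec6_5,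
      coeffL_add, coeffL_sub, coeffL_neg, coeffL_smul, coeffL_nsmul, coeffL_zsmul,
      coeffL_D, coeffL_T_mul, coeffL_mul_T, coeffL_T, coeffL_zero,
      Int.reduceAdd, Int.reduceSub, Int.reduceNeg, Int.reduceMul]
    norm_num
  · rw [mem_B_iff]
    simp only [F'op, Fop, Mop, Pi.add_apply, vec6_0, vec6_1, vec6_2, vec6_3, vec6_4, vec6_5,
      coeffL_add, coeffL_sub, coeffL_neg, coeffL_smul, coeffL_nsmul, coeffL_zsmul,
      coeffL_D, coeffL_T_mul, coeffL_mul_T, coeffL_T, coeffL_zero,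
      Int.reduceAdd, Int.reduceSub, Int.reduceNeg, Int.reduceMul]
    norm_num
  · intro α β h
    rw [mem_B_iff] at h
    obtain ⟨h1, -, h3, -⟩ := h
    simp only [Pi.add_apply, Pi.smul_apply, vec6_0, vec6_1, vec6_2, vec6_3, vec6_4, vec6_5,
      coeffL_add, coeffL_smul, coeffL_T, coeffL_zero,
      Int.reduceNeg] at h1 h3
    norm_num at h1 h3
    exact ⟨h1, h3⟩
  · intro z hE hF
    rw [mem_B_iff] at hE hF
    obtain ⟨e1, e2, e3, e4, e5, e6, e7, e8, e9, e10, e11, e12, e13, e14, e15, e16⟩ := hE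
    obtain ⟨f1, f2, f3, f4, f5, f6, f7, f8, f9, f10, f11, f12, f13, f14, f15, f16⟩ := hF
    simp only [E'op, Eop, Nop, Pi.add_apply, vec6_0, vec6_1, vec6_2, vec6_3, vec6_4, vec6_5,
      coeffL_add, coeffL_sub, coeffL_neg, coeffL_smul, coeffL_nsmul, coeffL_zsmul,
      coeffL_D, coeffL_T_mul, coeffL_mul_T, coeffL_T, coeffL_zero,
      Int.reduceAdd, Int.reduceSub, Int.reduceNeg, Int.reduceMul] at e3 e6 e7 e12 e13 e15
    norm_num at e3 e6 e7 e12 e13 e15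
    simp only [F'op, Fop, Mop, Pi.add_apply, vec6_0, vec6_1, vec6_2, vec6_3, vec6_4, vec6_5,
      coeffL_add, coeffL_sub, coeffL_neg, coeffL_smul, coeffL_nsmul, coeffL_zsmul,
      coeffL_D, coeffL_T_mul, coeffL_mul_T, coeffL_T, coeffL_zero,
      Int.reduceAdd, Int.reduceSub, Int.reduceNeg, Int.reduceMul] at f2 f3 f6 f7 f8 f12 f14 f15
    norm_num at f2 f3 f6 f7 f8 f12 f14 f15
    refine ⟨coeffL (z 0) (-1), coeffL (z 2) (-1), ?_⟩
    rw [mem_B_iff]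
    refine ⟨?_, ?_, ?_, ?_, ?_, ?_, ?_, ?_, ?_, ?_, ?_, ?_, ?_, ?_, ?_, ?_⟩ <;>
      simp only [Pi.add_apply, Pi.sub_apply, Pi.smul_apply,
        vec6_0, vec6_1, vec6_2, vec6_3, vec6_4, vec6_5,
        coeffL_add, coeffL_sub, coeffL_neg, coeffL_smul, coeffL_T, coeffL_zero,
        Int.reduceNeg] <;> norm_num
    · linear_combination e3
    · linear_combination -f2
    · linear_combination f3
    · linear_combination -e7 - e12
    · linear_combination (-1/3) * f6
    · linear_combination (-1/2) * f7 + f3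
    · linear_combination -f8
    · linear_combination e6
    · linear_combination e12
    · linear_combination (-1/3) * e13 + (4/3) * f2
    · linear_combination -f12 + (1/2) * f7 - f3
    · linear_combination e15
    · linear_combination (-1/2) * f14
    · linear_combination -f15
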